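/- Let V be a Hilbert space and A : V → V' a bounded self-adjoint operator satisfying the two-sided estimate c ≤ sup_{y≠0} ⟨Ax,y⟩/(‖x‖‖y‖) for all nonzero x, and ‖A‖_{L(V,V')} ≤ C. Then A is invertible with ‖A⁻¹‖_{L(V',V)} ≤ c⁻¹. -/

import Mathlib

/-!
STATEMENT 9: a bounded self-adjoint A : V → V' with inf-sup constant c > 0
(and ‖A‖ ≤ C) is invertible with ‖A⁻¹‖ ≤ c⁻¹.
-/

theorem stmt9
    {V : Type*} [NormedAddCommGroup V] [InnerProductSpace ℝ V] [CompleteSpace V]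
    (A : V →L[ℝ] StrongDual ℝ V)
    (hsym : ∀ x y : V, A x y = A y x)
    (c C : ℝ) (hc : 0 < c)
    (hinfsup : ∀ x : V, x ≠ 0 → c ≤ ⨆ y : {y : V // y ≠ 0}, A x y / (‖x‖ * ‖(y : V)‖))
    (hbound : ‖A‖ ≤ C) :
    ∃ Ainv : StrongDual ℝ V →L[ℝ] V,
      (∀ x : V, Ainv (A x) = x) ∧
      (∀ φ : StrongDual ℝ V, A (Ainv φ) = φ) ∧
      ‖Ainv‖ ≤ c⁻¹ := by
  -- key lower bound
  have key : ∀ x : V, c * ‖x‖ ≤ ‖A x‖ := by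
    intro x
    rcases eq_or_ne x 0 with rfl | hx
    · simp
    · have hx' : 0 < ‖x‖ := norm_pos_iff.mpr hx
      haveI : Nonempty {y : V // y ≠ 0} := ⟨⟨x, hx⟩⟩
      have hsup : (⨆ y : {y : V // y ≠ 0}, A x y / (‖x‖ * ‖(y : V)‖)) ≤ ‖A x‖ / ‖x‖ := by
        apply ciSup_le
        rintro ⟨y, hy⟩
        have hy' : 0 < ‖y‖ := norm_pos_iff.mpr hy
        have h1 : A x y ≤ ‖A x‖ * ‖y‖ := by
          have := (A x).le_opNorm y
          rw [Real.norm_eq_abs] at this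
          exact le_trans (le_abs_self _) this
        rw [div_le_div_iff₀ (by positivity) hx']
        nlinarith
      have h2 := le_trans (hinfsup x hx) hsup
      rw [le_div_iff₀ hx'] at h2
      linarith
  -- Riesz map
  set i := InnerProductSpace.toDual ℝ V with hi
  have hJsmul : ∀ (r : ℝ) (φ : StrongDual ℝ V), i.symm (r • φ) = r • i.symm φ := by
    intro r φ
    simpa using i.symm.map_smulₛₗ r φ
  set J : StrongDual ℝ V →L[ℝ] V :=
    { toFun := fun φ => i.symm φ
      map_add' := fun φ ψ => map_add _ φ ψ
      map_smul' := fun r φ => hJsmul r φ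
      cont := i.symm.continuous } with hJ
  set B : V →L[ℝ] V := J.comp A with hB
  have hBapp : ∀ x : V, B x = i.symm (A x) := fun x => rfl
  have hBinner : ∀ x y : V, inner ℝ (B x) y = A x y := by
    intro x y
    rw [hBapp]
    exact InnerProductSpace.toDual_symm_apply
  have hnormB : ∀ x : V, ‖B x‖ = ‖A x‖ := by
    intro x; rw [hBapp]; exact i.symm.norm_map _
  have keyB : ∀ x : V, c * ‖x‖ ≤ ‖B x‖ := fun x => (hnormB x) ▸ key x
  have hanti : AntilipschitzWith (⟨c⁻¹, by positivity⟩ : NNReal) B := by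
    apply ContinuousLinearMap.antilipschitz_of_bound
    intro x
    have h := keyB x
    show ‖x‖ ≤ c⁻¹ * ‖B x‖
    rw [← mul_le_mul_iff_right₀ hc, ← mul_assoc, mul_inv_cancel₀ hc.ne', one_mul]
    exact h
  have hinj : Function.Injective B := hanti.injective
  have hker : LinearMap.ker (B : V →ₗ[ℝ] V) = ⊥ := LinearMap.ker_eq_bot.mpr hinj
  have hclosed : IsClosed (Set.range B) :=
    hanti.isClosed_range B.uniformContinuous
  have hrange : LinearMap.range (B : V →ₗ[ℝ] V) = ⊤ := by
    have hcl : IsClosed ((LinearMap.range (B : V →ₗ[ℝ] V) : Submodule ℝ V) : Set V) := by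
      rw [LinearMap.coe_range]; exact hclosed
    haveI : CompleteSpace (LinearMap.range (B : V →ₗ[ℝ] V)) := hcl.completeSpace_coe
    rw [← Submodule.orthogonal_eq_bot_iff, Submodule.eq_bot_iff]
    intro y hy
    rw [Submodule.mem_orthogonal] at hy
    have h0 : ∀ x : V, A y x = 0 := by
      intro x
      rw [← hsym x y, ← hBinner x y]
      exact hy (B x) ⟨x, rfl⟩
    have hBy : B y = 0 := by
      have h1 : (inner ℝ (B y) (B y) : ℝ) = 0 := by
        rw [hBinner]; exact h0 (B y)
      exact inner_self_eq_zero.mp h1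
    have : B y = B 0 := by simpa using hBy
    exact hinj this
  -- invert B
  let E := ContinuousLinearEquiv.ofBijective B hker hrange
  refine ⟨(E.symm : V →L[ℝ] V).comp J, ?_, ?_, ?_⟩
  · intro x
    show E.symm (J (A x)) = x
    have hx : J (A x) = B x := rfl
    rw [hx]
    exact E.symm_apply_apply x
  · intro φ
    apply i.symm.injective
    have h1 : B (E.symm (i.symm φ)) = i.symm φ := E.apply_symm_apply (i.symm φ)
    exact h1
  · apply ContinuousLinearMap.opNorm_le_bound _ (by positivity)
    intro φ
    set x := E.symm (i.symm φ) with hx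
    have hAx : B x = i.symm φ := E.apply_symm_apply (i.symm φ)
    have h1 : c * ‖x‖ ≤ ‖B x‖ := keyB x
    rw [hAx] at h1
    have h2 : ‖i.symm φ‖ = ‖φ‖ := i.symm.norm_map φ
    rw [h2] at h1
    have : ‖(E.symm : V →L[ℝ] V).comp J φ‖ = ‖x‖ := rfl
    rw [this, ← mul_le_mul_iff_right₀ hc, ← mul_assoc, mul_inv_cancel₀ hc.ne', one_mul]
    exact h1
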